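/- Let q ∈ ℂ with q ∉ {0,1,2}, and let V ⊆ ℂ be a set satisfying: 0 ∈ V; 1 ∉ V; 1 − q ∉ V·V; V·V ⊆ V; and for all v₁, v₂ ∈ V one has f_q(v₁)·f_q(v₂) ≠ 1 and f_q(f_q(v₁)·f_q(v₂)) ∈ V. Then Z(G;q) ≠ 0 for every series-parallel graph G. -/

import Mathlib

open Polynomial

noncomputable section

/-- A finite (undirected) multigraph: a finite vertex type, a finite edge index type,
and a map assigning to each edge its pair of endpoints. -/
structure Multigraph where
  V : Type
  E : Type
  [finV : Finite V]
  [finE : Fintype E]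
  ends : E → V × V

attribute [instance] Multigraph.finV Multigraph.finE

namespace Multigraph

/-- The spanning subgraph `(V, F)` determined by a set `F` of edges, as a simple graph
recording adjacency. -/
def spanning (G : Multigraph) (F : Finset G.E) : SimpleGraph G.V where
  Adj u v := u ≠ v ∧ ∃ e ∈ F, G.ends e = (u, v) ∨ G.ends e = (v, u)
  symm := by
    constructor
    rintro u v ⟨huv, e, he, h⟩
    exact ⟨huv.symm, e, he, h.symm⟩
  loopless := by constructor; rintro v ⟨hv, -⟩; exact hv rfl

/-- `k(F)`: the number of connected components of the spanning subgraph `(V, F)`. -/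
def k (G : Multigraph) (F : Finset G.E) : ℕ :=
  Nat.card (G.spanning F).ConnectedComponent

/-- The chromatic polynomial `Z(G;q) = ∑_{F ⊆ E} (-1)^{|F|} q^{k(F)}`. -/
def Z (G : Multigraph) : Polynomial ℂ :=
  ∑ F : Finset G.E, (-1 : Polynomial ℂ) ^ F.card * X ^ G.k F

/-- A multigraph is loopless if no edge has equal endpoints. -/
def Loopless (G : Multigraph) : Prop := ∀ e : G.E, (G.ends e).1 ≠ (G.ends e).2

/-- The degree of a vertex: the number of edge-ends incident to it. -/
def degree (G : Multigraph) (x : G.V) : ℕ :=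
  Nat.card {e : G.E // (G.ends e).1 = x} + Nat.card {e : G.E // (G.ends e).2 = x}

end Multigraph

/-- A two-terminal graph: a finite multigraph together with two distinct
distinguished vertices, the start vertex `s` and the end vertex `t`. -/
structure TTGraph extends Multigraph where
  s : V
  t : V
  hst : s ≠ t

namespace TTGraph

/-- The chromatic polynomial of (the underlying multigraph of) a two-terminal graph. -/
def Z (G : TTGraph) : Polynomial ℂ := G.toMultigraph.Z

def Loopless (G : TTGraph) : Prop := G.toMultigraph.Loopless

/-- A single edge `K₂`, with its two endpoints as terminals. -/
def K2 : TTGraph where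
  V := Bool
  E := Unit
  ends := fun _ => (false, true)
  s := false
  t := true
  hst := Bool.false_ne_true

/-- The identification map used in the parallel composition: `s₂ ↦ s₁`, `t₂ ↦ t₁`. -/
def parMap (G₁ G₂ : TTGraph) (x : G₂.V) :
    G₁.V ⊕ {y : G₂.V // y ≠ G₂.s ∧ y ≠ G₂.t} := by
  classical
  exact if h1 : x = G₂.s then Sum.inl G₁.s
    else if h2 : x = G₂.t then Sum.inl G₁.t
    else Sum.inr ⟨x, h1, h2⟩

/-- Parallel composition of two-terminal graphs: the disjoint union with `s₁` and `s₂`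
identified (the new start) and `t₁` and `t₂` identified (the new end). -/
def par (G₁ G₂ : TTGraph) : TTGraph where
  V := G₁.V ⊕ {y : G₂.V // y ≠ G₂.s ∧ y ≠ G₂.t}
  E := G₁.E ⊕ G₂.E
  ends := Sum.elim
    (fun e => (Sum.inl (G₁.ends e).1, Sum.inl (G₁.ends e).2))
    (fun e => (parMap G₁ G₂ (G₂.ends e).1, parMap G₁ G₂ (G₂.ends e).2))
  s := Sum.inl G₁.s
  t := Sum.inl G₁.t
  hst := fun h => G₁.hst (Sum.inl.inj h)

/-- The identification map used in the series composition: `s₂ ↦ t₁`. -/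
def serMap (G₁ G₂ : TTGraph) (x : G₂.V) :
    G₁.V ⊕ {y : G₂.V // y ≠ G₂.s} := by
  classical
  exact if h : x = G₂.s then Sum.inl G₁.t else Sum.inr ⟨x, h⟩

/-- Series composition of two-terminal graphs: the disjoint union with `t₁` and `s₂`
identified; the new start is `s₁` and the new end is `t₂`. -/
def ser (G₁ G₂ : TTGraph) : TTGraph where
  V := G₁.V ⊕ {y : G₂.V // y ≠ G₂.s}
  E := G₁.E ⊕ G₂.E
  ends := Sum.elim
    (fun e => (Sum.inl (G₁.ends e).1, Sum.inl (G₁.ends e).2))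
    (fun e => (serMap G₁ G₂ (G₂.ends e).1, serMap G₁ G₂ (G₂.ends e).2))
  s := Sum.inl G₁.s
  t := Sum.inr ⟨G₂.t, G₂.hst.symm⟩
  hst := Sum.inl_ne_inr

/-- `Z^dif(G;q) := Z(G ∥ K₂; q)`. -/
def Zdif (G : TTGraph) : Polynomial ℂ := (G.par K2).Z

/-- `Z^same(G;q) := Z(G;q) - Z^dif(G;q)`. -/
def Zsame (G : TTGraph) : Polynomial ℂ := G.Z - G.Zdif

/-- Series-parallel two-terminal graphs: those obtained from a single edge `K₂` by
repeated series and parallel compositions. -/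
inductive IsSP : TTGraph → Prop
  | K2 : IsSP K2
  | ser {G₁ G₂ : TTGraph} : IsSP G₁ → IsSP G₂ → IsSP (G₁.ser G₂)
  | par {G₁ G₂ : TTGraph} : IsSP G₁ → IsSP G₂ → IsSP (G₁.par G₂)

/-- No edge of `G` joins the two terminals (membership in `𝒢*_SP` for series-parallel `G`). -/
def NoSTEdge (G : TTGraph) : Prop :=
  ∀ e : G.E, G.ends e ≠ (G.s, G.t) ∧ G.ends e ≠ (G.t, G.s)

end TTGraph


/-- The Möbius transformation `f_q(y) = 1 + q/(y-1)`. -/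
def fq (q y : ℂ) : ℂ := 1 + q / (y - 1)

/-- The product set `V·V = {v·w : v, w ∈ V}`. -/
def prodSet (V : Set ℂ) : Set ℂ := {z | ∃ v ∈ V, ∃ w ∈ V, z = v * w}
namespace SPProof
open scoped Classical

def Respects (G : Multigraph) (F : Finset G.E) {n : ℕ} (σ : G.V → Fin n) : Prop :=
  ∀ e ∈ F, σ (G.ends e).1 = σ (G.ends e).2

def Proper (G : Multigraph) {n : ℕ} (σ : G.V → Fin n) : Prop :=
  ∀ e, σ (G.ends e).1 ≠ σ (G.ends e).2

variable {n : ℕ}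

lemma respects_iff (G : Multigraph) (F : Finset G.E) (σ : G.V → Fin n) :
    Respects G F σ ↔ ∀ u v, (G.spanning F).Reachable u v → σ u = σ v := by
  constructor
  · intro h u v huv
    obtain ⟨w⟩ := huv
    induction w with
    | nil => rfl
    | @cons a b c hadj p ih =>
      obtain ⟨hne, e, he, hor⟩ := hadj
      have h1 := h e he
      rcases hor with h2 | h2 <;> rw [h2] at h1
      · exact h1.trans ih
      · exact h1.symm.trans ih
  · intro h e he
    by_cases hd : (G.ends e).1 = (G.ends e).2
    · rw [hd]
    · exact h _ _ (SimpleGraph.Adj.reachable ⟨hd, e, he, Or.inl rfl⟩)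

def respectsEquiv (G : Multigraph) (F : Finset G.E) (n : ℕ) :
    {σ : G.V → Fin n // Respects G F σ} ≃ ((G.spanning F).ConnectedComponent → Fin n) where
  toFun σ := SimpleGraph.ConnectedComponent.lift σ.1
    (fun u v p _ => (respects_iff G F σ.1).1 σ.2 u v ⟨p⟩)
  invFun g := ⟨fun v => g ((G.spanning F).connectedComponentMk v), by
    intro e he
    by_cases hd : (G.ends e).1 = (G.ends e).2
    · rw [hd]
    · exact congrArg g (SimpleGraph.ConnectedComponent.sound
        (SimpleGraph.Adj.reachable ⟨hd, e, he, Or.inl rfl⟩))⟩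
  left_inv σ := Subtype.ext (funext fun v => rfl)
  right_inv g := funext fun c => SimpleGraph.ConnectedComponent.ind (fun v => rfl) c

lemma card_respects (G : Multigraph) (F : Finset G.E) :
    Nat.card {σ : G.V → Fin n // Respects G F σ} = n ^ G.k F := by
  rw [Nat.card_congr (respectsEquiv G F n), Nat.card_fun,
    Nat.card_eq_fintype_card (α := Fin n), Fintype.card_fin]
  rfl


variable {n : ℕ}

lemma card_constrained {C : Type} [Finite C] (c₁ c₂ : C) (hne : c₁ ≠ c₂) :
    Nat.card {g : C → Fin n // g c₁ = g c₂} * n = n ^ Nat.card C := by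
  letI : DecidableEq C := Classical.decEq C
  have e : ({g : C → Fin n // g c₁ = g c₂} × Fin n) ≃ (C → Fin n) :=
    { toFun := fun p => Function.update p.1.1 c₁ p.2
      invFun := fun f => (⟨Function.update f c₁ (f c₂), by
          rw [Function.update_self, Function.update_of_ne (Ne.symm hne)]⟩, f c₁)
      left_inv := fun p => by
        ext1
        · apply Subtype.ext
          simp only [Function.update_of_ne (Ne.symm hne), Function.update_idem]
          rw [p.1.2.symm, Function.update_eq_self]
        · simp only [Function.update_self]
      right_inv := fun f => by
        simp only [Function.update_idem, Function.update_eq_self] }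
  have h2 := Nat.card_congr e
  rw [Nat.card_prod, Nat.card_eq_fintype_card (α := Fin n), Fintype.card_fin] at h2
  rw [h2, Nat.card_fun, Nat.card_eq_fintype_card (α := Fin n), Fintype.card_fin]


lemma card_respects_bc (G : TTGraph) (F : Finset G.E) :
    Nat.card {σ : G.V → Fin n // Respects G.toMultigraph F σ ∧ σ G.s = σ G.t} * n
      = if (G.spanning F).Reachable G.s G.t then n ^ (G.k F + 1) else n ^ G.k F := by
  by_cases hreach : (G.spanning F).Reachable G.s G.t
  · rw [if_pos hreach]
    have e : {σ : G.V → Fin n // Respects G.toMultigraph F σ ∧ σ G.s = σ G.t}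
        ≃ {σ : G.V → Fin n // Respects G.toMultigraph F σ} :=
      Equiv.subtypeEquivRight (fun σ =>
        ⟨fun h => h.1, fun h => ⟨h, (respects_iff _ F σ).1 h _ _ hreach⟩⟩)
    rw [Nat.card_congr e, card_respects, pow_succ]
  · rw [if_neg hreach]
    have e2 : {σ : G.V → Fin n // Respects G.toMultigraph F σ ∧ σ G.s = σ G.t}
        ≃ {g : (G.spanning F).ConnectedComponent → Fin n //
            g ((G.spanning F).connectedComponentMk G.s)
              = g ((G.spanning F).connectedComponentMk G.t)} :=
      (Equiv.subtypeSubtypeEquivSubtypeInter _ _).symm.trans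
        ((respectsEquiv G.toMultigraph F n).subtypeEquiv (fun x => Iff.rfl))
    rw [Nat.card_congr e2, card_constrained _ _
      (fun h => hreach ((SimpleGraph.ConnectedComponent.eq).1 h))]
    rfl


lemma sum_neg_one_pow_powerset {α : Type*} [DecidableEq α] (D : Finset α) :
    (∑ F ∈ D.powerset, (-1 : ℂ) ^ F.card) = if D = ∅ then 1 else 0 := by
  have h := Finset.sum_powerset_neg_one_pow_card (x := D)
  have h2 : ((∑ m ∈ D.powerset, (-1 : ℤ) ^ m.card : ℤ) : ℂ)
      = ∑ F ∈ D.powerset, (-1 : ℂ) ^ F.card := by push_cast; rfl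
  rw [← h2, h]
  split <;> simp

lemma ie (G : Multigraph) (n : ℕ) (S : (G.V → Fin n) → Prop) :
    ∑ F : Finset G.E, (-1 : ℂ) ^ F.card * (Nat.card {σ : G.V → Fin n // Respects G F σ ∧ S σ} : ℂ)
      = (Nat.card {σ : G.V → Fin n // Proper G σ ∧ S σ} : ℂ) := by
  classical
  haveI := Fintype.ofFinite G.V
  have hcard : ∀ (P : (G.V → Fin n) → Prop),
      (Nat.card {σ : G.V → Fin n // P σ} : ℂ) = ∑ σ : G.V → Fin n, if P σ then 1 else 0 := by
    intro P
    rw [Nat.card_eq_fintype_card, Fintype.card_subtype, Finset.card_filter]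
    push_cast
    rfl
  simp only [hcard]
  simp only [Finset.mul_sum]
  rw [Finset.sum_comm]
  apply Finset.sum_congr rfl
  intro σ _
  by_cases hS : S σ
  · simp only [hS, and_true]
    set D : Finset G.E := Finset.univ.filter (fun e => σ (G.ends e).1 = σ (G.ends e).2) with hD
    have hR : ∀ F : Finset G.E, (Respects G F σ) ↔ F ⊆ D := by
      intro F
      constructor
      · intro h e he
        simp only [hD, Finset.mem_filter, Finset.mem_univ, true_and]
        exact h e he
      · intro h e he
        have := h he
        simp only [hD, Finset.mem_filter] at this
        exact this.2
    have hfil : Finset.univ.filter (fun F : Finset G.E => F ⊆ D) = D.powerset := by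
      ext F; simp [Finset.mem_powerset]
    calc ∑ F : Finset G.E, (-1 : ℂ) ^ F.card * (if Respects G F σ then 1 else 0)
        = ∑ F ∈ Finset.univ.filter (fun F : Finset G.E => F ⊆ D), (-1 : ℂ) ^ F.card := by
          rw [Finset.sum_filter]
          apply Finset.sum_congr rfl
          intro F _
          simp only [hR F]
          split <;> simp
      _ = if D = ∅ then 1 else 0 := by rw [hfil, sum_neg_one_pow_powerset]
      _ = if Proper G σ then 1 else 0 := by
          congr 1
          simp only [eq_iff_iff]
          rw [Finset.filter_eq_empty_iff]
          constructor
          · intro h e; exact h (Finset.mem_univ e)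
          · intro h e _; exact h e
  · simp only [hS, and_false, if_false, mul_zero, Finset.sum_const_zero]


noncomputable def Apoly (G : TTGraph) : Polynomial ℂ :=
  ∑ F ∈ Finset.univ.filter (fun F : Finset G.E => (G.spanning F).Reachable G.s G.t),
    (-1 : Polynomial ℂ) ^ F.card * Polynomial.X ^ G.k F

noncomputable def Bpoly (G : TTGraph) : Polynomial ℂ :=
  ∑ F ∈ Finset.univ.filter (fun F : Finset G.E => ¬ (G.spanning F).Reachable G.s G.t),
    (-1 : Polynomial ℂ) ^ F.card * Polynomial.X ^ G.k F

lemma Apoly_add_Bpoly (G : TTGraph) : Apoly G + Bpoly G = TTGraph.Z G :=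
  Finset.sum_filter_add_sum_filter_not _ _ _

lemma eval_Z (G : Multigraph) (n : ℕ) :
    G.Z.eval (n : ℂ) = (Nat.card {σ : G.V → Fin n // Proper G σ} : ℂ) := by
  have h := ie G n (fun _ => True)
  simp only [and_true] at h
  rw [← h]
  simp only [Multigraph.Z, Polynomial.eval_finset_sum, Polynomial.eval_mul,
    Polynomial.eval_pow, Polynomial.eval_neg, Polynomial.eval_one, Polynomial.eval_X]
  apply Finset.sum_congr rfl
  intro F _
  rw [card_respects]
  push_cast
  ring

lemma eval_AB (G : TTGraph) (n : ℕ) :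
    (n : ℂ) * (Apoly G).eval (n : ℂ) + (Bpoly G).eval (n : ℂ)
      = (n : ℂ) * (Nat.card {σ : G.V → Fin n // Proper G.toMultigraph σ ∧ σ G.s = σ G.t} : ℂ) := by
  classical
  have hie := ie G.toMultigraph n (fun σ => σ G.s = σ G.t)
  rw [← hie, Finset.mul_sum]
  have hL : (n : ℂ) * (Apoly G).eval (n : ℂ) + (Bpoly G).eval (n : ℂ)
      = ∑ F : Finset G.E, (-1 : ℂ) ^ F.card *
          (if (G.spanning F).Reachable G.s G.t then (n : ℂ) ^ (G.k F + 1) else (n : ℂ) ^ G.k F) := by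
    simp only [Apoly, Bpoly, Polynomial.eval_finset_sum, Polynomial.eval_mul,
      Polynomial.eval_pow, Polynomial.eval_neg, Polynomial.eval_one, Polynomial.eval_X]
    rw [Finset.mul_sum, Finset.sum_filter, Finset.sum_filter, ← Finset.sum_add_distrib]
    apply Finset.sum_congr rfl
    intro F _
    split
    · simp only [pow_succ]; ring
    · ring
  rw [hL]
  apply Finset.sum_congr rfl
  intro F _
  have hbc := card_respects_bc (n := n) G F
  have hbc' : ((Nat.card {σ : G.V → Fin n // Respects G.toMultigraph F σ ∧ σ G.s = σ G.t}
      * n : ℕ) : ℂ)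
      = if (G.spanning F).Reachable G.s G.t then (n : ℂ) ^ (G.k F + 1) else (n : ℂ) ^ G.k F := by
    rw [hbc]; split <;> push_cast <;> ring
  push_cast at hbc'
  rw [← hbc']
  ring

def cnt (G : TTGraph) (n : ℕ) (a b : Fin n) : ℕ :=
  Nat.card {σ : G.V → Fin n // Proper G.toMultigraph σ ∧ σ G.s = a ∧ σ G.t = b}

lemma cnt_perm (G : TTGraph) {n : ℕ} (π : Equiv.Perm (Fin n)) (a b : Fin n) :
    cnt G n a b = cnt G n (π a) (π b) := by
  apply Nat.card_congr
  refine Equiv.subtypeEquiv (Equiv.arrowCongr (Equiv.refl G.V) π) (fun σ => ?_)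
  simp only [Equiv.arrowCongr_apply, Equiv.coe_refl, Function.comp_apply, Function.comp,
    CompTriple.comp_eq, Proper, Equiv.refl_symm, Equiv.refl_apply, id]
  constructor
  · rintro ⟨hp, hs, ht⟩
    exact ⟨fun e h => hp e (π.injective h), by rw [hs], by rw [ht]⟩
  · rintro ⟨hp, hs, ht⟩
    exact ⟨fun e h => hp e (by rw [h]), π.injective hs, π.injective ht⟩

lemma cnt_diag (G : TTGraph) {n : ℕ} (a b : Fin n) : cnt G n a a = cnt G n b b := by
  have h := cnt_perm G (Equiv.swap a b) a a
  rwa [Equiv.swap_apply_left] at h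

lemma cnt_off (G : TTGraph) {n : ℕ} {a b a' b' : Fin n} (h : a ≠ b) (h1 : a' ≠ b') :
    cnt G n a b = cnt G n a' b' := by
  have hc : Equiv.swap a a' b ≠ a' := by
    intro hh
    have hba := (Equiv.swap a a').injective (hh.trans (Equiv.swap_apply_left a a').symm)
    exact h hba.symm
  have hπ := cnt_perm G ((Equiv.swap a a').trans (Equiv.swap (Equiv.swap a a' b) b')) a b
  rwa [Equiv.trans_apply, Equiv.trans_apply, Equiv.swap_apply_left,
    Equiv.swap_apply_of_ne_of_ne (Ne.symm hc) h1, Equiv.swap_apply_left] at hπ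

lemma nat_card_fiber_sum {α : Type} [Finite α] {ι : Type} [Fintype ι] (f : α → ι) :
    Nat.card α = ∑ i : ι, Nat.card {x : α // f x = i} := by
  classical
  letI := Fintype.ofFinite α
  rw [Nat.card_eq_fintype_card, ← Fintype.card_congr (Equiv.sigmaFiberEquiv f),
    Fintype.card_sigma]
  apply Finset.sum_congr rfl
  intro i _
  rw [Nat.card_eq_fintype_card]

lemma csame_sum (G : TTGraph) (n : ℕ) :
    Nat.card {σ : G.V → Fin n // Proper G.toMultigraph σ ∧ σ G.s = σ G.t}
      = ∑ a : Fin n, cnt G n a a := by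
  rw [nat_card_fiber_sum (fun x => x.1 G.s)]
  apply Finset.sum_congr rfl
  intro a _
  apply Nat.card_congr
  exact
    { toFun := fun x => ⟨x.1.1, x.1.2.1, x.2, (x.1.2.2).symm.trans x.2⟩
      invFun := fun y => ⟨⟨y.1, y.2.1, y.2.2.1.trans y.2.2.2.symm⟩, y.2.2.1⟩
      left_inv := fun x => Subtype.ext (Subtype.ext rfl)
      right_inv := fun y => Subtype.ext rfl }

lemma total_sum (G : TTGraph) (n : ℕ) :
    Nat.card {σ : G.V → Fin n // Proper G.toMultigraph σ}
      = ∑ p : Fin n × Fin n, cnt G n p.1 p.2 := by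
  rw [nat_card_fiber_sum (fun x => (x.1 G.s, x.1 G.t))]
  apply Finset.sum_congr rfl
  intro p _
  apply Nat.card_congr
  exact
    { toFun := fun x => ⟨x.1.1, x.1.2, congrArg Prod.fst x.2, congrArg Prod.snd x.2⟩
      invFun := fun y => ⟨⟨y.1, y.2.1⟩, Prod.ext y.2.2.1 y.2.2.2⟩
      left_inv := fun x => Subtype.ext (Subtype.ext rfl)
      right_inv := fun y => Subtype.ext rfl }

lemma elim_parMap (G₁ G₂ : TTGraph) {n : ℕ} (σ₁ : G₁.V → Fin n) (σ₂ : G₂.V → Fin n)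
    (hs : σ₂ G₂.s = σ₁ G₁.s) (ht : σ₂ G₂.t = σ₁ G₁.t) (x : G₂.V) :
    Sum.elim σ₁ (σ₂ ∘ Subtype.val) (TTGraph.parMap G₁ G₂ x) = σ₂ x := by
  unfold TTGraph.parMap
  split_ifs with hx1 hx2
  · subst hx1; simp [hs]
  · subst hx2; simp [ht]
  · rfl

lemma cnt_par (G₁ G₂ : TTGraph) {n : ℕ} (a b : Fin n) :
    cnt (G₁.par G₂) n a b = cnt G₁ n a b * cnt G₂ n a b := by
  rw [cnt, cnt, cnt, ← Nat.card_prod]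
  apply Nat.card_congr
  refine
    { toFun := fun τ => (⟨fun v => τ.1 (Sum.inl v), fun e => τ.2.1 (Sum.inl e),
        τ.2.2.1, τ.2.2.2⟩,
        ⟨fun v => τ.1 (TTGraph.parMap G₁ G₂ v), fun e => τ.2.1 (Sum.inr e), ?_, ?_⟩)
      invFun := fun p => ⟨Sum.elim p.1.1 (p.2.1 ∘ Subtype.val), ?_, p.1.2.2.1, p.1.2.2.2⟩
      left_inv := ?_
      right_inv := ?_ }
  · show τ.1 (TTGraph.parMap G₁ G₂ G₂.s) = a
    have : TTGraph.parMap G₁ G₂ G₂.s = Sum.inl G₁.s := by simp [TTGraph.parMap]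
    rw [this]; exact τ.2.2.1
  · show τ.1 (TTGraph.parMap G₁ G₂ G₂.t) = b
    have : TTGraph.parMap G₁ G₂ G₂.t = Sum.inl G₁.t := by
      simp [TTGraph.parMap, G₂.hst.symm]
    rw [this]; exact τ.2.2.2
  · -- properness of glued coloring
    intro e
    rcases e with e | e
    · exact p.1.2.1 e
    · have hkey := elim_parMap G₁ G₂ p.1.1 p.2.1
        (p.2.2.2.1.trans p.1.2.2.1.symm) (p.2.2.2.2.trans p.1.2.2.2.symm)
      show Sum.elim p.1.1 (p.2.1 ∘ Subtype.val) (TTGraph.parMap G₁ G₂ (G₂.ends e).1)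
        ≠ Sum.elim p.1.1 (p.2.1 ∘ Subtype.val) (TTGraph.parMap G₁ G₂ (G₂.ends e).2)
      rw [hkey, hkey]
      exact p.2.2.1 e
  · intro τ
    apply Subtype.ext
    funext v
    rcases v with v | ⟨y, hy⟩
    · rfl
    · show τ.1 (TTGraph.parMap G₁ G₂ y) = τ.1 (Sum.inr ⟨y, hy⟩)
      simp [TTGraph.parMap, hy.1, hy.2]
  · intro p
    ext : 1
    · apply Subtype.ext; rfl
    · apply Subtype.ext
      funext x
      exact elim_parMap G₁ G₂ p.1.1 p.2.1
        (p.2.2.2.1.trans p.1.2.2.1.symm) (p.2.2.2.2.trans p.1.2.2.2.symm) x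

lemma elim_serMap (G₁ G₂ : TTGraph) {n : ℕ} (σ₁ : G₁.V → Fin n) (σ₂ : G₂.V → Fin n)
    (hs : σ₂ G₂.s = σ₁ G₁.t) (x : G₂.V) :
    Sum.elim σ₁ (σ₂ ∘ Subtype.val) (TTGraph.serMap G₁ G₂ x) = σ₂ x := by
  unfold TTGraph.serMap
  split_ifs with hx1
  · subst hx1; simp [hs]
  · rfl

lemma cnt_ser (G₁ G₂ : TTGraph) {n : ℕ} (a c : Fin n) :
    cnt (G₁.ser G₂) n a c = ∑ b : Fin n, cnt G₁ n a b * cnt G₂ n b c := by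
  rw [cnt, nat_card_fiber_sum (fun τ => τ.1 (Sum.inl G₁.t))]
  apply Finset.sum_congr rfl
  intro b _
  rw [cnt, cnt, ← Nat.card_prod]
  apply Nat.card_congr
  refine
    { toFun := fun τ => (⟨fun v => τ.1.1 (Sum.inl v), fun e => τ.1.2.1 (Sum.inl e),
        τ.1.2.2.1, τ.2⟩,
        ⟨fun v => τ.1.1 (TTGraph.serMap G₁ G₂ v), fun e => τ.1.2.1 (Sum.inr e), ?_, ?_⟩)
      invFun := fun p => ⟨⟨Sum.elim p.1.1 (p.2.1 ∘ Subtype.val), ?_, p.1.2.2.1, ?_⟩, p.1.2.2.2⟩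
      left_inv := ?_
      right_inv := ?_ }
  · show τ.1.1 (TTGraph.serMap G₁ G₂ G₂.s) = b
    have : TTGraph.serMap G₁ G₂ G₂.s = Sum.inl G₁.t := by simp [TTGraph.serMap]
    rw [this]; exact τ.2
  · show τ.1.1 (TTGraph.serMap G₁ G₂ G₂.t) = c
    have : TTGraph.serMap G₁ G₂ G₂.t = Sum.inr ⟨G₂.t, G₂.hst.symm⟩ := by
      simp [TTGraph.serMap, G₂.hst.symm]
    rw [this]; exact τ.1.2.2.2
  · -- properness
    intro e
    rcases e with e | e
    · exact p.1.2.1 e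
    · have hkey := elim_serMap G₁ G₂ p.1.1 p.2.1 (p.2.2.2.1.trans p.1.2.2.2.symm)
      show Sum.elim p.1.1 (p.2.1 ∘ Subtype.val) (TTGraph.serMap G₁ G₂ (G₂.ends e).1)
        ≠ Sum.elim p.1.1 (p.2.1 ∘ Subtype.val) (TTGraph.serMap G₁ G₂ (G₂.ends e).2)
      rw [hkey, hkey]
      exact p.2.2.1 e
  · -- boundary t
    show Sum.elim p.1.1 (p.2.1 ∘ Subtype.val) (Sum.inr ⟨G₂.t, _⟩) = c
    exact p.2.2.2.2
  · intro τ
    apply Subtype.ext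
    apply Subtype.ext
    funext v
    rcases v with v | ⟨y, hy⟩
    · rfl
    · show τ.1.1 (TTGraph.serMap G₁ G₂ y) = τ.1.1 (Sum.inr ⟨y, hy⟩)
      simp [TTGraph.serMap, hy]
  · intro p
    ext : 1
    · apply Subtype.ext; rfl
    · apply Subtype.ext
      funext x
      exact elim_serMap G₁ G₂ p.1.1 p.2.1 (p.2.2.2.1.trans p.1.2.2.2.symm) x

lemma eval_A_B (G : TTGraph) {n : ℕ} (hn : 2 ≤ n) (a b : Fin n) (hab : a ≠ b) :
    (Apoly G).eval (n:ℂ) = (n:ℂ) * ((cnt G n a a : ℂ) - (cnt G n a b : ℂ))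
    ∧ (Bpoly G).eval (n:ℂ) = (n:ℂ)^2 * (cnt G n a b : ℂ) := by
  have hsame : ((Nat.card {σ : G.V → Fin n // Proper G.toMultigraph σ ∧ σ G.s = σ G.t}) : ℂ)
      = (n:ℂ) * (cnt G n a a : ℂ) := by
    rw [csame_sum]
    push_cast
    calc ∑ x : Fin n, (cnt G n x x : ℂ)
        = ∑ _x : Fin n, (cnt G n a a : ℂ) :=
          Finset.sum_congr rfl fun x _ => by rw [cnt_diag G x a]
      _ = (n:ℂ) * (cnt G n a a : ℂ) := by
          rw [Finset.sum_const, Finset.card_univ, Fintype.card_fin, nsmul_eq_mul]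
  have htotal : ((Nat.card {σ : G.V → Fin n // Proper G.toMultigraph σ}) : ℂ)
      = (n:ℂ) * (cnt G n a a : ℂ) + (n:ℂ) * ((n:ℂ) - 1) * (cnt G n a b : ℂ) := by
    rw [total_sum]
    push_cast
    rw [Fintype.sum_prod_type]
    have hx : ∀ x : Fin n, (∑ y : Fin n, (cnt G n x y : ℂ))
        = (n:ℂ) * (cnt G n a b : ℂ) + ((cnt G n a a : ℂ) - (cnt G n a b : ℂ)) := by
      intro x
      calc ∑ y : Fin n, (cnt G n x y : ℂ)
          = ∑ y : Fin n, ((cnt G n a b : ℂ) +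
              if x = y then (cnt G n a a : ℂ) - (cnt G n a b : ℂ) else 0) := by
            apply Finset.sum_congr rfl
            intro y _
            by_cases hxy : x = y
            · subst hxy
              rw [if_pos rfl, cnt_diag G x a]
              ring
            · rw [if_neg hxy, cnt_off G hxy hab]
              ring
        _ = (n:ℂ) * (cnt G n a b : ℂ) + ((cnt G n a a : ℂ) - (cnt G n a b : ℂ)) := by
            rw [Finset.sum_add_distrib, Finset.sum_const, Finset.card_univ, Fintype.card_fin,
              nsmul_eq_mul, Finset.sum_ite_eq, if_pos (Finset.mem_univ x)]
    calc ∑ x : Fin n, ∑ y : Fin n, (cnt G n x y : ℂ)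
        = ∑ _x : Fin n, ((n:ℂ) * (cnt G n a b : ℂ) +
            ((cnt G n a a : ℂ) - (cnt G n a b : ℂ))) := Finset.sum_congr rfl fun x _ => hx x
      _ = _ := by
          rw [Finset.sum_const, Finset.card_univ, Fintype.card_fin, nsmul_eq_mul]
          ring
  have h1 : (Apoly G).eval (n:ℂ) + (Bpoly G).eval (n:ℂ)
      = (n:ℂ) * (cnt G n a a : ℂ) + (n:ℂ) * ((n:ℂ) - 1) * (cnt G n a b : ℂ) := by
    have := congrArg (Polynomial.eval ((n:ℕ):ℂ)) (Apoly_add_Bpoly G)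
    rw [Polynomial.eval_add] at this
    rw [this, TTGraph.Z, eval_Z, htotal]
  have h2 : (n:ℂ) * (Apoly G).eval (n:ℂ) + (Bpoly G).eval (n:ℂ)
      = (n:ℂ)^2 * (cnt G n a a : ℂ) := by
    rw [eval_AB, hsame]
    ring
  have hn1 : (n:ℂ) - 1 ≠ 0 := by
    intro h
    have : (n:ℂ) = 1 := by linear_combination h
    rw [show (1:ℂ) = ((1:ℕ):ℂ) by norm_num] at this
    exact (by omega : n ≠ 1) (Nat.cast_injective this)
  have hA : (Apoly G).eval (n:ℂ) = (n:ℂ) * ((cnt G n a a : ℂ) - (cnt G n a b : ℂ)) := by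
    apply mul_left_cancel₀ hn1
    linear_combination h2 - h1
  exact ⟨hA, by linear_combination h1 - hA⟩

lemma poly_eq_of_eval_nat (p r : Polynomial ℂ)
    (h : ∀ n : ℕ, 2 ≤ n → p.eval (n : ℂ) = r.eval (n : ℂ)) : p = r := by
  apply Polynomial.eq_of_infinite_eval_eq
  have hinf : ((fun (m:ℕ) => (m:ℂ)) '' Set.Ici 2).Infinite :=
    (Set.Ici_infinite 2).image (fun x _ y _ hxy => Nat.cast_injective hxy)
  apply hinf.mono
  rintro x ⟨m, hm, rfl⟩
  exact h m hm

lemma cnt_K2_diag {n : ℕ} (a : Fin n) : cnt TTGraph.K2 n a a = 0 := by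
  rw [cnt, Nat.card_eq_zero]
  left
  constructor
  rintro ⟨σ, hp, hs, ht⟩
  exact hp () (hs.trans ht.symm)

lemma cnt_K2_off {n : ℕ} {a b : Fin n} (hab : a ≠ b) : cnt TTGraph.K2 n a b = 1 := by
  rw [cnt]
  rw [Nat.card_eq_one_iff_unique]
  constructor
  · constructor
    rintro ⟨σ, hp, hs, ht⟩ ⟨σ', hp', hs', ht'⟩
    apply Subtype.ext
    funext v
    cases v
    · exact hs.trans hs'.symm
    · exact ht.trans ht'.symm
  · refine ⟨⟨fun v => if v = true then b else a, ?_, ?_, ?_⟩⟩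
    · intro e
      simp [TTGraph.K2]
      exact hab
    · simp [TTGraph.K2]
    · simp [TTGraph.K2]

lemma Apoly_K2 : Apoly TTGraph.K2 = -Polynomial.X := by
  apply poly_eq_of_eval_nat
  intro n hn
  have hab : (⟨0, by omega⟩ : Fin n) ≠ ⟨1, by omega⟩ := by
    intro h; have := congrArg Fin.val h; simp at this
  rw [(eval_A_B TTGraph.K2 hn _ _ hab).1, cnt_K2_diag, cnt_K2_off hab]
  simp

lemma Bpoly_K2 : Bpoly TTGraph.K2 = Polynomial.X ^ 2 := by
  apply poly_eq_of_eval_nat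
  intro n hn
  have hab : (⟨0, by omega⟩ : Fin n) ≠ ⟨1, by omega⟩ := by
    intro h; have := congrArg Fin.val h; simp at this
  rw [(eval_A_B TTGraph.K2 hn _ _ hab).2, cnt_K2_off hab]
  simp

lemma cnt_ser_same (G₁ G₂ : TTGraph) {n : ℕ} (hn : 2 ≤ n) {a b : Fin n} (hab : a ≠ b) :
    (cnt (G₁.ser G₂) n a a : ℂ)
      = (cnt G₁ n a a : ℂ) * (cnt G₂ n a a : ℂ)
        + ((n:ℂ) - 1) * (cnt G₁ n a b : ℂ) * (cnt G₂ n a b : ℂ) := by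
  rw [cnt_ser]
  push_cast
  rw [← Finset.add_sum_erase _ _ (Finset.mem_univ a)]
  congr 1
  calc ∑ y ∈ Finset.univ.erase a, (cnt G₁ n a y : ℂ) * (cnt G₂ n y a : ℂ)
      = ∑ _y ∈ Finset.univ.erase a, (cnt G₁ n a b : ℂ) * (cnt G₂ n a b : ℂ) := by
        apply Finset.sum_congr rfl
        intro y hy
        have hya : y ≠ a := Finset.ne_of_mem_erase hy
        rw [cnt_off G₁ (Ne.symm hya) hab, cnt_off G₂ hya hab]
    _ = ((n:ℂ) - 1) * ((cnt G₁ n a b : ℂ) * (cnt G₂ n a b : ℂ)) := by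
        rw [Finset.sum_const, Finset.card_erase_of_mem (Finset.mem_univ a),
          Finset.card_univ, Fintype.card_fin, nsmul_eq_mul]
        have : ((n - 1 : ℕ) : ℂ) = (n:ℂ) - 1 := by
          rw [Nat.cast_sub (by omega)]; norm_num
        rw [this]
  ring

lemma cnt_ser_off (G₁ G₂ : TTGraph) {n : ℕ} (hn : 2 ≤ n) {a b : Fin n} (hab : a ≠ b) :
    (cnt (G₁.ser G₂) n a b : ℂ)
      = (cnt G₁ n a a : ℂ) * (cnt G₂ n a b : ℂ)
        + (cnt G₁ n a b : ℂ) * (cnt G₂ n a a : ℂ)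
        + ((n:ℂ) - 2) * (cnt G₁ n a b : ℂ) * (cnt G₂ n a b : ℂ) := by
  rw [cnt_ser]
  push_cast
  rw [← Finset.add_sum_erase _ _ (Finset.mem_univ a),
    ← Finset.add_sum_erase _ _ (Finset.mem_erase.2 ⟨Ne.symm hab, Finset.mem_univ b⟩)]
  have hb : (cnt G₂ n b b : ℂ) = (cnt G₂ n a a : ℂ) := by rw [cnt_diag G₂ b a]
  rw [hb]
  have hsum : ∑ y ∈ (Finset.univ.erase a).erase b, (cnt G₁ n a y : ℂ) * (cnt G₂ n y b : ℂ)
      = ((n:ℂ) - 2) * ((cnt G₁ n a b : ℂ) * (cnt G₂ n a b : ℂ)) := by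
    calc ∑ y ∈ (Finset.univ.erase a).erase b, (cnt G₁ n a y : ℂ) * (cnt G₂ n y b : ℂ)
        = ∑ _y ∈ (Finset.univ.erase a).erase b, (cnt G₁ n a b : ℂ) * (cnt G₂ n a b : ℂ) := by
          apply Finset.sum_congr rfl
          intro y hy
          have hyb : y ≠ b := Finset.ne_of_mem_erase hy
          have hya : y ≠ a := Finset.ne_of_mem_erase (Finset.mem_of_mem_erase hy)
          rw [cnt_off G₁ (Ne.symm hya) hab, cnt_off G₂ hyb hab]
      _ = ((n:ℂ) - 2) * ((cnt G₁ n a b : ℂ) * (cnt G₂ n a b : ℂ)) := by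
          rw [Finset.sum_const, Finset.card_erase_of_mem
              (Finset.mem_erase.2 ⟨Ne.symm hab, Finset.mem_univ b⟩),
            Finset.card_erase_of_mem (Finset.mem_univ a),
            Finset.card_univ, Fintype.card_fin, nsmul_eq_mul]
          have : ((n - 1 - 1 : ℕ) : ℂ) = (n:ℂ) - 2 := by
            rw [Nat.cast_sub (by omega), Nat.cast_sub (by omega)]; push_cast; ring
          rw [this]
  rw [hsum]
  ring

lemma poly_Apar (G₁ G₂ : TTGraph) :
    Apoly (G₁.par G₂) * Polynomial.X ^ 2
      = Apoly G₁ * Apoly G₂ * Polynomial.X + Apoly G₁ * Bpoly G₂ + Apoly G₂ * Bpoly G₁ := by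
  apply poly_eq_of_eval_nat
  intro n hn
  have hab : (⟨0, by omega⟩ : Fin n) ≠ ⟨1, by omega⟩ := fun h => by
    have := congrArg Fin.val h; simp at this
  obtain ⟨hA1, hB1⟩ := eval_A_B G₁ hn ⟨0, by omega⟩ ⟨1, by omega⟩ hab
  obtain ⟨hA2, hB2⟩ := eval_A_B G₂ hn ⟨0, by omega⟩ ⟨1, by omega⟩ hab
  obtain ⟨hAp, hBp⟩ := eval_A_B (G₁.par G₂) hn ⟨0, by omega⟩ ⟨1, by omega⟩ hab
  simp only [Polynomial.eval_mul, Polynomial.eval_pow, Polynomial.eval_X, Polynomial.eval_add]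
  rw [hAp, hA1, hA2, hB1, hB2, cnt_par, cnt_par]
  push_cast
  ring

lemma poly_Bpar (G₁ G₂ : TTGraph) :
    Bpoly (G₁.par G₂) * Polynomial.X ^ 2 = Bpoly G₁ * Bpoly G₂ := by
  apply poly_eq_of_eval_nat
  intro n hn
  have hab : (⟨0, by omega⟩ : Fin n) ≠ ⟨1, by omega⟩ := fun h => by
    have := congrArg Fin.val h; simp at this
  obtain ⟨hA1, hB1⟩ := eval_A_B G₁ hn ⟨0, by omega⟩ ⟨1, by omega⟩ hab
  obtain ⟨hA2, hB2⟩ := eval_A_B G₂ hn ⟨0, by omega⟩ ⟨1, by omega⟩ hab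
  obtain ⟨hAp, hBp⟩ := eval_A_B (G₁.par G₂) hn ⟨0, by omega⟩ ⟨1, by omega⟩ hab
  simp only [Polynomial.eval_mul, Polynomial.eval_pow, Polynomial.eval_X]
  rw [hBp, hB1, hB2, cnt_par]
  push_cast
  ring

lemma poly_Aser (G₁ G₂ : TTGraph) :
    Apoly (G₁.ser G₂) * Polynomial.X = Apoly G₁ * Apoly G₂ := by
  apply poly_eq_of_eval_nat
  intro n hn
  have hab : (⟨0, by omega⟩ : Fin n) ≠ ⟨1, by omega⟩ := fun h => by
    have := congrArg Fin.val h; simp at this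
  obtain ⟨hA1, hB1⟩ := eval_A_B G₁ hn ⟨0, by omega⟩ ⟨1, by omega⟩ hab
  obtain ⟨hA2, hB2⟩ := eval_A_B G₂ hn ⟨0, by omega⟩ ⟨1, by omega⟩ hab
  obtain ⟨hAs, hBs⟩ := eval_A_B (G₁.ser G₂) hn ⟨0, by omega⟩ ⟨1, by omega⟩ hab
  simp only [Polynomial.eval_mul, Polynomial.eval_X]
  rw [hAs, hA1, hA2, cnt_ser_same G₁ G₂ hn hab, cnt_ser_off G₁ G₂ hn hab]
  ring

lemma poly_Bser (G₁ G₂ : TTGraph) :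
    Bpoly (G₁.ser G₂) * Polynomial.X
      = Apoly G₁ * Bpoly G₂ + Apoly G₂ * Bpoly G₁ + Bpoly G₁ * Bpoly G₂ := by
  apply poly_eq_of_eval_nat
  intro n hn
  have hab : (⟨0, by omega⟩ : Fin n) ≠ ⟨1, by omega⟩ := fun h => by
    have := congrArg Fin.val h; simp at this
  obtain ⟨hA1, hB1⟩ := eval_A_B G₁ hn ⟨0, by omega⟩ ⟨1, by omega⟩ hab
  obtain ⟨hA2, hB2⟩ := eval_A_B G₂ hn ⟨0, by omega⟩ ⟨1, by omega⟩ hab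
  obtain ⟨hAs, hBs⟩ := eval_A_B (G₁.ser G₂) hn ⟨0, by omega⟩ ⟨1, by omega⟩ hab
  simp only [Polynomial.eval_mul, Polynomial.eval_X, Polynomial.eval_add]
  rw [hBs, hA1, hA2, hB1, hB2, cnt_ser_off G₁ G₂ hn hab]
  ring

end SPProof

open SPProof


/-- **Theorem.** If `q ∉ {0,1,2}` and `V ⊆ ℂ` satisfies `0 ∈ V`, `1 ∉ V`,
`1 - q ∉ V·V`, `V·V ⊆ V` and `f_q(f_q(v₁)·f_q(v₂)) ∈ V` (with
`f_q(v₁)·f_q(v₂) ≠ 1`) for all `v₁, v₂ ∈ V`, then `Z(G;q) ≠ 0` for every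
series-parallel graph `G`. -/
theorem zero_free_of_invariant_set (q : ℂ) (h0 : q ≠ 0) (h1 : q ≠ 1) (h2 : q ≠ 2)
    (V : Set ℂ) (hV0 : (0 : ℂ) ∈ V) (hV1 : (1 : ℂ) ∉ V)
    (hVq : (1 - q) ∉ prodSet V) (hVV : prodSet V ⊆ V)
    (hf : ∀ v₁ ∈ V, ∀ v₂ ∈ V, fq q v₁ * fq q v₂ ≠ 1 ∧ fq q (fq q v₁ * fq q v₂) ∈ V) :
    ∀ G : TTGraph, G.IsSP → (TTGraph.Z G).eval q ≠ 0 := by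
  have hVne1 : ∀ w ∈ V, w - 1 ≠ 0 := fun w hw he => hV1 (by
    have : w = 1 := by linear_combination he
    exact this ▸ hw)
  -- the induction invariant
  suffices key : ∀ G : TTGraph, G.IsSP →
      (Bpoly G).eval q ≠ 0 ∧ ((Apoly G).eval q + (Bpoly G).eval q ≠ 0) ∧
      ∃ w ∈ V, q * (Apoly G).eval q = (Bpoly G).eval q * (w - 1) by
    intro G hG
    have hZ : (TTGraph.Z G).eval q = (Apoly G).eval q + (Bpoly G).eval q := by
      rw [← Apoly_add_Bpoly, Polynomial.eval_add]
    rw [hZ]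
    exact (key G hG).2.1
  intro G hG
  induction hG with
  | K2 =>
    rw [Apoly_K2, Bpoly_K2]
    simp only [Polynomial.eval_neg, Polynomial.eval_X, Polynomial.eval_pow]
    refine ⟨pow_ne_zero 2 h0, ?_, 0, hV0, by ring⟩
    intro h
    have : q * (q - 1) = 0 := by linear_combination h
    rcases mul_eq_zero.1 this with h | h
    · exact h0 h
    · exact h1 (by linear_combination h)
  | @ser G₁ G₂ hG₁ hG₂ ih₁ ih₂ =>
    obtain ⟨hb₁, hz₁, w₁, hw₁V, hw₁⟩ := ih₁
    obtain ⟨hb₂, hz₂, w₂, hw₂V, hw₂⟩ := ih₂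
    set a₁ := (Apoly G₁).eval q
    set b₁ := (Bpoly G₁).eval q
    set a₂ := (Apoly G₂).eval q
    set b₂ := (Bpoly G₂).eval q
    have hAs : (Apoly (G₁.ser G₂)).eval q * q = a₁ * a₂ := by
      have := congrArg (Polynomial.eval q) (poly_Aser G₁ G₂)
      simpa using this
    have hBs : (Bpoly (G₁.ser G₂)).eval q * q = a₁ * b₂ + a₂ * b₁ + b₁ * b₂ := by
      have := congrArg (Polynomial.eval q) (poly_Bser G₁ G₂)
      simpa using this
    set as := (Apoly (G₁.ser G₂)).eval q
    set bs := (Bpoly (G₁.ser G₂)).eval q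
    have hw₁1 : w₁ - 1 ≠ 0 := hVne1 w₁ hw₁V
    have hw₂1 : w₂ - 1 ≠ 0 := hVne1 w₂ hw₂V
    obtain ⟨hne1, hmem⟩ := hf w₁ hw₁V w₂ hw₂V
    set D := w₁ + w₂ + q - 2 with hDdef
    have hD : D ≠ 0 := by
      intro hD0
      apply hne1
      rw [fq, fq]
      field_simp
      linear_combination q * hD0
    have hF : fq q w₁ * fq q w₂ - 1 = q * D / ((w₁ - 1) * (w₂ - 1)) := by
      rw [fq, fq]
      field_simp
      ring
    have hq2bs : q ^ 2 * bs = b₁ * b₂ * D := by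
      have : q ^ 2 * bs = q * (bs * q) := by ring
      rw [this, hBs]
      linear_combination b₂ * hw₁ + b₁ * hw₂
    have hbs : bs ≠ 0 := by
      intro h
      have : b₁ * b₂ * D = 0 := by rw [← hq2bs, h]; ring
      rcases mul_eq_zero.1 this with h' | h'
      · rcases mul_eq_zero.1 h' with h'' | h''
        · exact hb₁ h''
        · exact hb₂ h''
      · exact hD h'
    have hzs : as + bs ≠ 0 := by
      intro h
      have hq : q * (as + bs) = (a₁ + b₁) * (a₂ + b₂) := by
        have : q * (as + bs) = as * q + bs * q := by ring
        rw [this, hAs, hBs]; ring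
      rw [h, mul_zero] at hq
      rcases mul_eq_zero.1 hq.symm with h' | h'
      · exact hz₁ h'
      · exact hz₂ h'
    refine ⟨hbs, hzs, fq q (fq q w₁ * fq q w₂), hmem, ?_⟩
    set u := fq q w₁ * fq q w₂ with hu
    have hws : fq q u - 1 = (w₁ - 1) * (w₂ - 1) / D := by
      rw [fq, hF]
      field_simp
      ring
    have key : (q * as) * D = bs * ((w₁ - 1) * (w₂ - 1)) := by
      apply mul_left_cancel₀ (pow_ne_zero 2 h0)
      linear_combination q^2*D*hAs - (w₁-1)*(w₂-1)*hq2bs + D*q*a₂*hw₁ + D*b₁*(w₁-1)*hw₂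
    calc q * as = (q * as) * D / D := by field_simp
      _ = bs * ((w₁ - 1) * (w₂ - 1)) / D := by rw [key]
      _ = bs * (fq q u - 1) := by rw [hws]; ring
  | @par G₁ G₂ hG₁ hG₂ ih₁ ih₂ =>
    obtain ⟨hb₁, hz₁, w₁, hw₁V, hw₁⟩ := ih₁
    obtain ⟨hb₂, hz₂, w₂, hw₂V, hw₂⟩ := ih₂
    set a₁ := (Apoly G₁).eval q
    set b₁ := (Bpoly G₁).eval q
    set a₂ := (Apoly G₂).eval q
    set b₂ := (Bpoly G₂).eval q
    have hAp : (Apoly (G₁.par G₂)).eval q * q ^ 2 = a₁ * a₂ * q + a₁ * b₂ + a₂ * b₁ := by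
      have := congrArg (Polynomial.eval q) (poly_Apar G₁ G₂)
      simpa using this
    have hBp : (Bpoly (G₁.par G₂)).eval q * q ^ 2 = b₁ * b₂ := by
      have := congrArg (Polynomial.eval q) (poly_Bpar G₁ G₂)
      simpa using this
    set ap := (Apoly (G₁.par G₂)).eval q
    set bp := (Bpoly (G₁.par G₂)).eval q
    have hbp : bp ≠ 0 := by
      intro h
      rw [h, zero_mul] at hBp
      rcases mul_eq_zero.1 hBp.symm with h' | h'
      · exact hb₁ h'
      · exact hb₂ h'
    have hwwV : w₁ * w₂ ∈ prodSet V := ⟨w₁, hw₁V, w₂, hw₂V, rfl⟩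
    have hzp : ap + bp ≠ 0 := by
      intro h
      have hq : q ^ 3 * (ap + bp) = b₁ * b₂ * (w₁ * w₂ - 1 + q) := by
        have : q ^ 3 * (ap + bp) = q * (ap * q ^ 2) + q * (bp * q ^ 2) := by ring
        rw [this, hAp, hBp]
        linear_combination (q * a₂ + b₂) * hw₁ + b₁ * w₁ * hw₂
      rw [h, mul_zero] at hq
      have hww1 : w₁ * w₂ - 1 + q ≠ 0 := by
        intro h'
        exact hVq (by
          have : w₁ * w₂ = 1 - q := by linear_combination h'
          exact this ▸ hwwV)
      rcases mul_eq_zero.1 hq.symm with h' | h'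
      · rcases mul_eq_zero.1 h' with h'' | h''
        · exact hb₁ h''
        · exact hb₂ h''
      · exact hww1 h'
    refine ⟨hbp, hzp, w₁ * w₂, hVV hwwV, ?_⟩
    apply mul_left_cancel₀ (pow_ne_zero 2 h0)
    have : q ^ 2 * (q * ap) = q * (ap * q ^ 2) := by ring
    rw [this, hAp]
    linear_combination (q * a₂ + b₂) * hw₁ + b₁ * w₁ * hw₂ - (w₁ * w₂ - 1) * hBp

end
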